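/- Let 0 < λ ≤ 1/1000, let E_λ = {(s,t) : s − t ≥ 15λ^{1/3}, 1/2 ≤ t < s ≤ 2}, and let (s_h,t_h) be as above for |h₁| ≤ λ, |h₂| ≤ λ². Then ∬_{E_λ} |1/(s−t) − 1/(s_h−t_h)| (s−t) ds dt ≤ C λ^{1/3} for an absolute constant C. -/

import Mathlib

open MeasureTheory Real

theorem jacobian_difference_integral_bound :
    ∃ C > 0, ∀ lam h₁ h₂ : ℝ, 0 < lam → lam ≤ 1 / 1000 →
      |h₁| ≤ lam → |h₂| ≤ lam ^ 2 →
      (∫ p in {p : ℝ × ℝ | p.1 - p.2 ≥ 15 * lam ^ ((1 : ℝ) / 3) ∧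
          1 / 2 ≤ p.2 ∧ p.2 < p.1 ∧ p.1 ≤ 2},
        |1 / (p.1 - p.2) -
          1 / (((1 / 2) * (h₁ + p.1 - p.2 + (h₂ + p.1 ^ 2 - p.2 ^ 2) / (h₁ + p.1 - p.2))) -
               ((1 / 2) * (p.2 - p.1 - h₁ + (h₂ + p.1 ^ 2 - p.2 ^ 2) / (h₁ + p.1 - p.2))))| *
          (p.1 - p.2)) ≤ C * lam ^ ((1 : ℝ) / 3) := by
  refine ⟨3, by norm_num, ?_⟩
  intro lam h₁ h₂ hlam hlam' hh1 hh2
  set a : ℝ := lam ^ ((1 : ℝ) / 3) with ha_def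
  have ha : 0 < a := Real.rpow_pos_of_pos hlam _
  have ha1 : a ≤ 1 := Real.rpow_le_one hlam.le (by linarith) (by norm_num)
  have hcube : a ^ 3 = lam := by
    rw [ha_def, ← Real.rpow_natCast (lam ^ ((1 : ℝ) / 3)) 3, ← Real.rpow_mul hlam.le]
    norm_num
  set S : Set (ℝ × ℝ) := {p : ℝ × ℝ | p.1 - p.2 ≥ 15 * lam ^ ((1 : ℝ) / 3) ∧
      1 / 2 ≤ p.2 ∧ p.2 < p.1 ∧ p.1 ≤ 2} with hS_def
  have hSm : MeasurableSet S := by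
    have m1 : Measurable fun p : ℝ × ℝ => p.1 := measurable_fst
    have m2 : Measurable fun p : ℝ × ℝ => p.2 := measurable_snd
    exact (measurableSet_le measurable_const (m1.sub m2)).inter
      ((measurableSet_le measurable_const m2).inter
        ((measurableSet_lt m2 m1).inter (measurableSet_le m1 measurable_const)))
  have hSsub : S ⊆ Set.Icc (1/2 : ℝ) 2 ×ˢ Set.Icc (1/2 : ℝ) 2 := by
    rintro ⟨s, t⟩ ⟨_, h2, h3, h4⟩
    exact ⟨⟨by dsimp at *; linarith, by dsimp at *; linarith⟩,
           ⟨by dsimp at *; linarith, by dsimp at *; linarith⟩⟩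
  have h1 : volume S ≤ ENNReal.ofReal (9/4) := by
    refine le_trans (measure_mono hSsub) ?_
    rw [Measure.volume_eq_prod, Measure.prod_prod]
    simp only [Real.volume_Icc]
    rw [← ENNReal.ofReal_mul (by norm_num)]
    exact ENNReal.ofReal_le_ofReal (by norm_num)
  have hSfin : volume S < ⊤ := lt_of_le_of_lt h1 ENNReal.ofReal_lt_top
  have hStoReal : (volume S).toReal ≤ 9/4 := by
    calc (volume S).toReal ≤ (ENNReal.ofReal (9/4)).toReal :=
          ENNReal.toReal_mono (by simp) h1
      _ = 9/4 := by rw [ENNReal.toReal_ofReal]; norm_num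
  have key : ∀ p ∈ S, ‖|1 / (p.1 - p.2) -
          1 / (((1 / 2) * (h₁ + p.1 - p.2 + (h₂ + p.1 ^ 2 - p.2 ^ 2) / (h₁ + p.1 - p.2))) -
               ((1 / 2) * (p.2 - p.1 - h₁ + (h₂ + p.1 ^ 2 - p.2 ^ 2) / (h₁ + p.1 - p.2))))| *
          (p.1 - p.2)‖ ≤ a := by
    rintro ⟨s, t⟩ ⟨hd, h2, h3, h4⟩
    dsimp only at *
    set d : ℝ := s - t with hd_def
    have hd15 : d ≥ 15 * a := hd
    have hd0 : 0 < d := lt_of_lt_of_le (by positivity) hd15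
    have hha : |h₁| ≤ a := by
      have hla : lam ≤ a := by
        rw [← hcube]
        nlinarith [mul_nonneg (mul_nonneg ha.le (sub_nonneg.2 ha1)) (by linarith : (0:ℝ) ≤ 1 + a)]
      linarith
    have hdh : d + h₁ ≥ 14 * a := by
      have := neg_abs_le h₁
      linarith
    have hdh0 : 0 < d + h₁ := lt_of_lt_of_le (by positivity) hdh
    have hexp : ((1 / 2) * (h₁ + s - t + (h₂ + s ^ 2 - t ^ 2) / (h₁ + s - t))) -
               ((1 / 2) * (t - s - h₁ + (h₂ + s ^ 2 - t ^ 2) / (h₁ + s - t))) = d + h₁ := by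
      rw [hd_def]; ring
    rw [hexp]
    have hdiff : 1 / d - 1 / (d + h₁) = h₁ / (d * (d + h₁)) := by
      field_simp
      ring
    rw [hdiff, abs_div, abs_of_pos (mul_pos hd0 hdh0), norm_eq_abs,
      abs_of_nonneg (by positivity), div_mul_eq_mul_div, div_le_iff₀ (by positivity)]
    have hl : |h₁| ≤ a ^ 3 := by rw [hcube]; exact hh1
    have hm1 : |h₁| ≤ a * a := by nlinarith [sq_nonneg a]
    have hm2 : |h₁| ≤ a * (d + h₁) := by
      have h14 : a * (14 * a) ≤ a * (d + h₁) := mul_le_mul_of_nonneg_left hdh ha.le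
      nlinarith [sq_nonneg a]
    calc |h₁| * d ≤ (a * (d + h₁)) * d := mul_le_mul_of_nonneg_right hm2 hd0.le
      _ = a * (d * (d + h₁)) := by ring
  calc (∫ p in S, |1 / (p.1 - p.2) -
          1 / (((1 / 2) * (h₁ + p.1 - p.2 + (h₂ + p.1 ^ 2 - p.2 ^ 2) / (h₁ + p.1 - p.2))) -
               ((1 / 2) * (p.2 - p.1 - h₁ + (h₂ + p.1 ^ 2 - p.2 ^ 2) / (h₁ + p.1 - p.2))))| *
          (p.1 - p.2))
      ≤ ‖∫ p in S, |1 / (p.1 - p.2) -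
          1 / (((1 / 2) * (h₁ + p.1 - p.2 + (h₂ + p.1 ^ 2 - p.2 ^ 2) / (h₁ + p.1 - p.2))) -
               ((1 / 2) * (p.2 - p.1 - h₁ + (h₂ + p.1 ^ 2 - p.2 ^ 2) / (h₁ + p.1 - p.2))))| *
          (p.1 - p.2)‖ := le_norm_self _
    _ ≤ a * (volume S).toReal := norm_setIntegral_le_of_norm_le_const hSfin key
    _ ≤ a * (9/4) := by nlinarith
    _ ≤ 3 * a := by nlinarith
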